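/- Assume condition (2.2) and the stability assumption (6.3) hold. Let g : [0,S] → ℝ be continuously differentiable and w = (g(s_{m+1}), g(S))^T ∈ ℝ². Then there exists ξ ∈ (s_{m+1}, S) such that for all 0 ≤ n ≤ N−1: (a) |ψ_n(Δt C) w|_∞ ≤ |g(S)| + 2S|g'(ξ)|, (b) |φ(Δt A)^n Y_1 w|_∞ ≤ 2K(|g(S)| + S|g'(ξ)|), and (c) |Y_n (I − θΔt C)^{−1} w|_∞ ≤ (K+1)(|g(S)| + 2S|g'(ξ)|). -/

import Mathlib

/-- Tridiagonal matrix with diagonal `α`, subdiagonal `β` and superdiagonal `γ`. -/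
def tridiag {m : ℕ} (α β γ : Fin m → ℝ) : Matrix (Fin m) (Fin m) ℝ :=
  Matrix.of fun i j =>
    if (i : ℕ) = j then α i
    else if (i : ℕ) = (j : ℕ) + 1 then β i
    else if (j : ℕ) = (i : ℕ) + 1 then γ i
    else 0

/-- The `(m+1)×2` matrix whose only nonzero entry is `g` in the bottom-left position. -/
def Bmat {m : ℕ} (g : ℝ) : Matrix (Fin (m + 1)) (Fin 2) ℝ :=
  Matrix.of fun i j => if i = Fin.last m ∧ j = 0 then g else 0

/-- The `2×2` matrix both of whose rows equal `(−rS/h, r·s_{m+1}/h)`. -/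
noncomputable def Cmat (r spen S h : ℝ) : Matrix (Fin 2) (Fin 2) ℝ :=
  Matrix.of fun _ j => if j = 0 then -(r * S) / h else r * spen / h

/-- The maximum norm of a real matrix: `‖X‖_∞ = max_i Σ_j |X i j|`. -/
noncomputable def matMaxNorm {ι κ : Type*} [Fintype ι] [Fintype κ]
    (X : Matrix ι κ ℝ) : ℝ :=
  ⨆ i, ∑ j, |X i j|

/-- The maximum norm of a real vector: `|v|_∞ = max_i |v i|`. -/
noncomputable def vecMaxNorm {ι : Type*} [Fintype ι] (v : ι → ℝ) : ℝ :=
  ⨆ i, |v i|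

/-- The logarithmic maximum norm `μ_∞[X] = max_i ( x_{ii} + Σ_{j≠i} |x_{ij}| )`. -/
noncomputable def logMaxNorm {ι : Type*} [Fintype ι] [DecidableEq ι]
    (X : Matrix ι ι ℝ) : ℝ :=
  ⨆ i, (X i i + ∑ j ∈ Finset.univ.erase i, |X i j|)

/-- `φ(Δt X) = (I − θΔt X)⁻¹ (I + (1−θ)Δt X)`. -/
noncomputable def phiM {ι : Type*} [Fintype ι] [DecidableEq ι] (θ dt : ℝ)
    (X : Matrix ι ι ℝ) : Matrix ι ι ℝ :=
  (1 - (θ * dt) • X)⁻¹ * (1 + ((1 - θ) * dt) • X)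

/-- `ψ_n(Δt X) = φ(Δt X)^n (I − θΔt X)⁻¹`. -/
noncomputable def psiM {ι : Type*} [Fintype ι] [DecidableEq ι] (θ dt : ℝ) (n : ℕ)
    (X : Matrix ι ι ℝ) : Matrix ι ι ℝ :=
  (phiM θ dt X) ^ n * (1 - (θ * dt) • X)⁻¹


set_option maxHeartbeats 16000000


open Matrix Finset

namespace Stmt18Aux

lemma sum_mulVec {ι κ o' : Type*} [Fintype κ] {s : Finset ι}
    (f : ι → Matrix o' κ ℝ) (v : κ → ℝ) :
    (∑ j ∈ s, f j) *ᵥ v = ∑ j ∈ s, (f j) *ᵥ v := by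
  classical
  induction s using Finset.induction_on with
  | empty => simp [Matrix.zero_mulVec]
  | insert _ _ h ih => simp [Finset.sum_insert h, Matrix.add_mulVec, ih]

lemma sum_ite_le {ι : Type*} [DecidableEq ι] {s : Finset ι} (P : ι → Prop) [DecidablePred P] {x : ℝ}
    (hx : 0 ≤ x) (huniq : ∀ a ∈ s, ∀ b ∈ s, P a → P b → a = b) :
    ∑ j ∈ s, (if P j then x else 0) ≤ x := by
  classical
  rw [← Finset.sum_filter]
  rw [Finset.sum_const, nsmul_eq_mul]
  have hcard : (s.filter P).card ≤ 1 := by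
    rw [Finset.card_le_one]
    intro a ha b hb
    simp only [Finset.mem_filter] at ha hb
    exact huniq a ha.1 b hb.1 ha.2 hb.2
  calc ((s.filter P).card : ℝ) * x ≤ 1 * x := by
        apply mul_le_mul_of_nonneg_right _ hx
        exact_mod_cast hcard
    _ = x := one_mul x

lemma dd_bound {n : ℕ} (M : Matrix (Fin (n+1)) (Fin (n+1)) ℝ) (δ : Fin (n+1) → ℝ)
    (hδ : ∀ i, 0 < δ i)
    (hdd : ∀ i, ∑ j ∈ Finset.univ.erase i, |M i j| + δ i ≤ |M i i|)
    {y z : Fin (n+1) → ℝ} (h : M.mulVec y = z)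
    {c : ℝ} (hz : ∀ i, |z i| ≤ δ i * c) :
    ∀ i, |y i| ≤ c := by
  obtain ⟨i0, -, hi0⟩ := Finset.exists_max_image Finset.univ (fun i => |y i|) ⟨0, Finset.mem_univ 0⟩
  have key : |y i0| ≤ c := by
    have hrow : M i0 i0 * y i0 + ∑ j ∈ Finset.univ.erase i0, M i0 j * y j = z i0 := by
      have := congrFun h i0
      simpa [Matrix.mulVec, dotProduct, Finset.add_sum_erase Finset.univ (fun j => M i0 j * y j)
        (Finset.mem_univ i0)] using this
    have h1 : |M i0 i0| * |y i0| ≤ |z i0| + ∑ j ∈ Finset.univ.erase i0, |M i0 j| * |y j| := by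
      have : M i0 i0 * y i0 = z i0 - ∑ j ∈ Finset.univ.erase i0, M i0 j * y j := by linarith
      calc |M i0 i0| * |y i0| = |M i0 i0 * y i0| := (abs_mul _ _).symm
        _ ≤ |z i0| + |∑ j ∈ Finset.univ.erase i0, M i0 j * y j| := by
            rw [this]; exact abs_sub _ _
        _ ≤ |z i0| + ∑ j ∈ Finset.univ.erase i0, |M i0 j * y j| := by
            gcongr; exact Finset.abs_sum_le_sum_abs _ _
        _ = |z i0| + ∑ j ∈ Finset.univ.erase i0, |M i0 j| * |y j| := by simp [abs_mul]
    have h2 : ∑ j ∈ Finset.univ.erase i0, |M i0 j| * |y j|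
        ≤ (∑ j ∈ Finset.univ.erase i0, |M i0 j|) * |y i0| := by
      rw [Finset.sum_mul]
      apply Finset.sum_le_sum
      intro j _
      exact mul_le_mul_of_nonneg_left (hi0 j (Finset.mem_univ j)) (abs_nonneg _)
    have h3 : (∑ j ∈ Finset.univ.erase i0, |M i0 j| + δ i0) * |y i0| ≤ |M i0 i0| * |y i0| :=
      mul_le_mul_of_nonneg_right (hdd i0) (abs_nonneg _)
    have h4 : δ i0 * |y i0| ≤ δ i0 * c := by nlinarith [hz i0]
    exact le_of_mul_le_mul_left h4 (hδ i0)
  intro i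
  exact le_trans (hi0 i (Finset.mem_univ i)) key

lemma dd_isUnit {n : ℕ} (M : Matrix (Fin (n+1)) (Fin (n+1)) ℝ) (δ : Fin (n+1) → ℝ)
    (hδ : ∀ i, 0 < δ i)
    (hdd : ∀ i, ∑ j ∈ Finset.univ.erase i, |M i j| + δ i ≤ |M i i|) :
    IsUnit M.det := by
  rw [isUnit_iff_ne_zero]
  intro hdet
  obtain ⟨v, hv, hMv⟩ := Matrix.exists_mulVec_eq_zero_iff.2 hdet
  have : ∀ i, |v i| ≤ 0 := dd_bound M δ hδ hdd hMv (fun i => by simp [mul_nonneg (hδ i).le])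
  exact hv (funext fun i => abs_nonpos_iff.1 (this i))

lemma eig_inv {ι : Type*} [Fintype ι] [DecidableEq ι] {M : Matrix ι ι ℝ} (hM : IsUnit M.det)
    {x : ι → ℝ} {μ : ℝ} (hμ : μ ≠ 0) (h : M.mulVec x = μ • x) :
    M⁻¹.mulVec x = μ⁻¹ • x := by
  have h1 : M⁻¹.mulVec (M.mulVec x) = x := by
    rw [Matrix.mulVec_mulVec, Matrix.nonsing_inv_mul _ hM, Matrix.one_mulVec]
  rw [h, Matrix.mulVec_smul] at h1
  exact ((inv_smul_eq_iff₀ hμ).2 h1.symm).symm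

lemma eig_pow {ι : Type*} [Fintype ι] [DecidableEq ι] {M : Matrix ι ι ℝ}
    {x : ι → ℝ} {μ : ℝ} (h : M.mulVec x = μ • x) (k : ℕ) :
    (M ^ k).mulVec x = μ ^ k • x := by
  induction k with
  | zero => simp [Matrix.one_mulVec]
  | succ k ih =>
    rw [pow_succ, ← Matrix.mulVec_mulVec, h, Matrix.mulVec_smul, ih, smul_smul, pow_succ]
    ring_nf

lemma vecMaxNorm_le {ι : Type*} [Fintype ι] [Nonempty ι] {v : ι → ℝ} {c : ℝ}
    (h : ∀ i, |v i| ≤ c) : vecMaxNorm v ≤ c := by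
  show (⨆ i, |v i|) ≤ c
  exact ciSup_le h

lemma rowSum_le_matMaxNorm {ι κ : Type*} [Fintype ι] [Fintype κ] (X : Matrix ι κ ℝ) (i : ι) :
    ∑ j, |X i j| ≤ matMaxNorm X := by
  show ∑ j, |X i j| ≤ ⨆ i, ∑ j, |X i j|
  exact le_ciSup (f := fun i => ∑ j, |X i j|) (Finite.bddAbove_range _) i

lemma mulVec_entry_bound {ι κ : Type*} [Fintype ι] [Fintype κ] (X : Matrix ι κ ℝ)
    {v : κ → ℝ} {c KX : ℝ} (hX : matMaxNorm X ≤ KX) (hv : ∀ j, |v j| ≤ c) (hc : 0 ≤ c) :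
    ∀ i, |X.mulVec v i| ≤ KX * c := by
  intro i
  calc |X.mulVec v i| = |∑ j, X i j * v j| := by simp [Matrix.mulVec, dotProduct]
    _ ≤ ∑ j, |X i j * v j| := Finset.abs_sum_le_sum_abs _ _
    _ = ∑ j, |X i j| * |v j| := by simp [abs_mul]
    _ ≤ ∑ j, |X i j| * c := by
        apply Finset.sum_le_sum; intro j _
        exact mul_le_mul_of_nonneg_left (hv j) (abs_nonneg _)
    _ = (∑ j, |X i j|) * c := by rw [Finset.sum_mul]
    _ ≤ KX * c := mul_le_mul_of_nonneg_right (le_trans (rowSum_le_matMaxNorm X i) hX) hc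

lemma abs_sub_le' (x y : ℝ) : |x - y| ≤ |x| + |y| := by
  rw [sub_eq_add_neg]
  simpa using abs_add_le x (-y)

end Stmt18Aux


/-- Assume condition (2.2) and the stability assumption (6.3) hold.  Let
`g : [0,S] → ℝ` be continuously differentiable and `w = (g(s_{m+1}), g(S))ᵀ`.  Then
there exists `ξ ∈ (s_{m+1}, S)` such that for all `0 ≤ n ≤ N−1`:
(a) `|ψ_n(Δt C) w|_∞ ≤ |g(S)| + 2S|g'(ξ)|`,
(b) `|φ(Δt A)^n Y_1 w|_∞ ≤ 2K(|g(S)| + S|g'(ξ)|)`,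
(c) `|Y_n (I − θΔt C)⁻¹ w|_∞ ≤ (K+1)(|g(S)| + 2S|g'(ξ)|)`. -/
theorem statement18 (m : ℕ) (r spen S T : ℝ) (hr : 0 < r) (hT : 0 < T)
    (hspen : 0 < spen) (hsS : spen < S)
    (θ : ℝ) (hθ : θ ∈ Set.Icc (1/2 : ℝ) 1)
    (N : ℕ) (hN : 1 ≤ N)
    (α β γ : Fin (m + 1) → ℝ) (hconv : m = 0 → β 0 = 0)
    (A : Matrix (Fin (m + 1)) (Fin (m + 1)) ℝ) (hA : A = tridiag α β γ)
    (B : Matrix (Fin (m + 1)) (Fin 2) ℝ) (hB : B = Bmat (γ (Fin.last m)))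
    (C : Matrix (Fin 2) (Fin 2) ℝ) (hC : C = Cmat r spen S (S - spen))
    (hinv : IsUnit (r • (1 : Matrix (Fin (m + 1)) (Fin (m + 1)) ℝ) + A).det)
    (hmu : logMaxNorm (r • (1 : Matrix (Fin (m + 1)) (Fin (m + 1)) ℝ) + A) ≤ 0)
    (hrow : r + α (Fin.last m) + |β (Fin.last m)| + |γ (Fin.last m)| ≤ 0)
    (K : ℝ)
    (hK : ∀ N' : ℕ, 1 ≤ N' → ∀ n : ℕ, n ≤ N' →
      matMaxNorm ((phiM θ (T / N') A) ^ n) ≤ K)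
    (g g' : ℝ → ℝ)
    (hg : ∀ x ∈ Set.Icc (0:ℝ) S, HasDerivAt g (g' x) x)
    (hg' : ContinuousOn g' (Set.Icc (0:ℝ) S))
    (w : Fin 2 → ℝ) (hw : w = ![g spen, g S])
    (Y1 : Matrix (Fin (m + 1)) (Fin 2) ℝ)
    (hY1 : Y1 = (1 - (θ * (T / N)) • A)⁻¹ * ((T / N) • B) * (1 - (θ * (T / N)) • C)⁻¹)
    (Y : ℕ → Matrix (Fin (m + 1)) (Fin 2) ℝ)
    (hY : ∀ n : ℕ, Y n = ∑ j ∈ Finset.range n,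
      (phiM θ (T / N) A) ^ (n - j - 1) * Y1 * (phiM θ (T / N) C) ^ j) :
    ∃ ξ ∈ Set.Ioo spen S, ∀ n : ℕ, n ≤ N - 1 →
      (vecMaxNorm ((psiM θ (T / N) n C).mulVec w) ≤ |g S| + 2 * S * |g' ξ|) ∧
      (vecMaxNorm (((phiM θ (T / N) A) ^ n * Y1).mulVec w) ≤
        2 * K * (|g S| + S * |g' ξ|)) ∧
      (vecMaxNorm ((Y n * (1 - (θ * (T / N)) • C)⁻¹).mulVec w) ≤
        (K + 1) * (|g S| + 2 * S * |g' ξ|)) := by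
  classical
  obtain ⟨hθh, hθ1⟩ := hθ
  have hθ0 : 0 < θ := lt_of_lt_of_le (by norm_num) hθh
  have hN0 : (0:ℝ) < (N:ℝ) := by exact_mod_cast Nat.lt_of_lt_of_le Nat.zero_lt_one hN
  set dt : ℝ := T / (N:ℝ) with hdteq
  have hdt : 0 < dt := div_pos hT hN0
  have hθdt : 0 < θ * dt := mul_pos hθ0 hdt
  have hh : (0:ℝ) < S - spen := by linarith
  have hhne : S - spen ≠ 0 := ne_of_gt hh
  have hS0 : (0:ℝ) < S := lt_trans hspen hsS
  -- mean value theorem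
  have hcont : ContinuousOn g (Set.Icc spen S) := by
    intro x hx
    exact ((hg x ⟨le_trans hspen.le hx.1, hx.2⟩).continuousAt).continuousWithinAt
  have hderiv : ∀ x ∈ Set.Ioo spen S, HasDerivAt g (g' x) x := fun x hx =>
    hg x ⟨(hspen.trans hx.1).le, hx.2.le⟩
  obtain ⟨ξ, hξ, hξs⟩ := exists_hasDerivAt_eq_slope g g' hsS hcont hderiv
  refine ⟨ξ, hξ, ?_⟩
  set b : ℝ := g' ξ with hbeq
  set a : ℝ := g S - S * b with haeq
  have h5 : g S - g spen = b * (S - spen) := by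
    rw [hξs]; field_simp
  have hgspen : g spen = a + b * spen := by rw [haeq]; nlinarith [h5]
  set u : Fin 2 → ℝ := ![1, 1] with hueq
  set v2 : Fin 2 → ℝ := ![spen, S] with hveq
  have hwdec : w = a • u + b • v2 := by
    rw [hw]
    funext i
    fin_cases i
    · simp [hueq, hveq]
      linarith [hgspen]
    · simp [hueq, hveq]
      linarith [haeq]
  -- scalar quantities
  set c : ℝ := θ * dt * r with hceq
  have hc0 : 0 ≤ c := by rw [hceq]; exact (mul_pos hθdt hr).le
  have h1c : (0:ℝ) < 1 + c := by linarith
  have h1cne : (1:ℝ) + c ≠ 0 := ne_of_gt h1c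
  set φc : ℝ := (1 - (1-θ)*dt*r) / (1+c) with hφceq
  have hφc1 : |φc| ≤ 1 := by
    rw [hφceq, abs_div, abs_of_pos h1c, div_le_one h1c, abs_le, hceq]
    constructor <;> nlinarith [mul_pos hdt hr,
      mul_nonneg (mul_nonneg (by linarith : (0:ℝ) ≤ 2*θ - 1) hdt.le) hr.le]
  have hpow : ∀ k : ℕ, |φc|^k ≤ 1 := fun k => pow_le_one₀ (abs_nonneg _) hφc1
  have hinv1 : (1+c)⁻¹ ≤ 1 := by
    have h1 := mul_inv_cancel₀ h1cne
    have h2 : 0 < (1+c)⁻¹ := inv_pos.2 h1c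
    nlinarith [mul_nonneg hc0 h2.le]
  have hinvpos : (0:ℝ) < (1+c)⁻¹ := inv_pos.2 h1c
  -- C eigenvectors
  have hCu : C *ᵥ u = (-r) • u := by
    funext i
    rw [hC]
    fin_cases i <;>
    · simp [Cmat, Matrix.mulVec, dotProduct, Fin.sum_univ_two, hueq]
      field_simp
      ring
  have hCv : C *ᵥ v2 = 0 := by
    funext i
    rw [hC]
    fin_cases i <;>
    · simp [Cmat, Matrix.mulVec, dotProduct, Fin.sum_univ_two, hveq]
      field_simp
      ring
  set MC : Matrix (Fin 2) (Fin 2) ℝ := 1 - (θ*dt) • C with hMCeq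
  set NC : Matrix (Fin 2) (Fin 2) ℝ := 1 + ((1-θ)*dt) • C with hNCeq
  have hMCu : MC *ᵥ u = (1 + c) • u := by
    rw [hMCeq, Matrix.sub_mulVec, Matrix.one_mulVec, Matrix.smul_mulVec, hCu]
    funext i
    simp [hceq]
    ring
  have hMCv : MC *ᵥ v2 = v2 := by
    rw [hMCeq, Matrix.sub_mulVec, Matrix.one_mulVec, Matrix.smul_mulVec, hCv]
    simp
  have hNCu : NC *ᵥ u = (1 - (1-θ)*dt*r) • u := by
    rw [hNCeq, Matrix.add_mulVec, Matrix.one_mulVec, Matrix.smul_mulVec, hCu]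
    funext i
    simp
    ring
  have hNCv : NC *ᵥ v2 = v2 := by
    rw [hNCeq, Matrix.add_mulVec, Matrix.one_mulVec, Matrix.smul_mulVec, hCv]
    simp
  have hMCdet : IsUnit MC.det := by
    have hdet : MC.det = 1 + c := by
      rw [Matrix.det_fin_two, hMCeq, hC, hceq]
      simp [Cmat, Matrix.sub_apply, Matrix.smul_apply, Matrix.one_apply, smul_eq_mul]
      field_simp
      ring
    rw [hdet]
    exact isUnit_iff_ne_zero.2 h1cne
  have hMCiu : MC⁻¹ *ᵥ u = (1+c)⁻¹ • u := Stmt18Aux.eig_inv hMCdet h1cne hMCu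
  have hMCiv : MC⁻¹ *ᵥ v2 = v2 := by
    have h1 : MC *ᵥ v2 = (1:ℝ) • v2 := by rw [hMCv, one_smul]
    have := Stmt18Aux.eig_inv hMCdet one_ne_zero h1
    simpa using this
  set FC : Matrix (Fin 2) (Fin 2) ℝ := phiM θ dt C with hFCdef
  have hFCeq : FC = MC⁻¹ * NC := by rw [hFCdef, hMCeq, hNCeq]; rfl
  have hFCu : FC *ᵥ u = φc • u := by
    rw [hFCeq, ← Matrix.mulVec_mulVec, hNCu, Matrix.mulVec_smul, hMCiu, smul_smul, hφceq,
      div_eq_mul_inv]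
  have hFCv : FC *ᵥ v2 = v2 := by
    rw [hFCeq, ← Matrix.mulVec_mulVec, hNCv, hMCiv]
  have hFCnu : ∀ k : ℕ, (FC^k) *ᵥ u = φc^k • u := fun k => Stmt18Aux.eig_pow hFCu k
  have hFCnv : ∀ k : ℕ, (FC^k) *ᵥ v2 = v2 := by
    intro k
    have h1 : FC *ᵥ v2 = (1:ℝ) • v2 := by rw [hFCv, one_smul]
    have := Stmt18Aux.eig_pow h1 k
    simpa using this
  have hx1 : MC⁻¹ *ᵥ w = (a * (1+c)⁻¹) • u + b • v2 := by
    rw [hwdec, Matrix.mulVec_add, Matrix.mulVec_smul, Matrix.mulVec_smul, hMCiu, hMCiv,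
      smul_smul]
  -- A-side structure
  set Pm : Matrix (Fin (m+1)) (Fin (m+1)) ℝ :=
    r • (1 : Matrix (Fin (m+1)) (Fin (m+1)) ℝ) + A with hPmeq
  have hAdiag : ∀ i, A i i = α i := by
    intro i; rw [hA]; simp [tridiag]
  have hPdiag : ∀ i, Pm i i = r + α i := by
    intro i
    rw [hPmeq]
    simp [Matrix.add_apply, Matrix.smul_apply, Matrix.one_apply_eq, smul_eq_mul, hAdiag i]
  have hPoff : ∀ i j : Fin (m+1), j ≠ i → Pm i j = A i j := by
    intro i j hj
    rw [hPmeq]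
    simp [Matrix.add_apply, Matrix.smul_apply, Matrix.one_apply_ne (Ne.symm hj)]
  have hmurow : ∀ i, (r + α i) + ∑ j ∈ Finset.univ.erase i, |A i j| ≤ 0 := by
    intro i
    have h1 : (Pm i i + ∑ j ∈ Finset.univ.erase i, |Pm i j|) ≤ logMaxNorm Pm := by
      show _ ≤ ⨆ i, (Pm i i + ∑ j ∈ Finset.univ.erase i, |Pm i j|)
      exact le_ciSup (f := fun i => (Pm i i + ∑ j ∈ Finset.univ.erase i, |Pm i j|))
        (Finite.bddAbove_range _) i
    have h2 : ∑ j ∈ Finset.univ.erase i, |Pm i j| = ∑ j ∈ Finset.univ.erase i, |A i j| := by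
      refine Finset.sum_congr rfl (fun j hj => ?_)
      rw [hPoff i j (Finset.mem_erase.1 hj).1]
    rw [hPdiag i, h2] at h1
    linarith [hmu]
  have hro0 : ∀ i, (0:ℝ) ≤ ∑ j ∈ Finset.univ.erase i, |A i j| :=
    fun i => Finset.sum_nonneg (fun j _ => abs_nonneg _)
  have hαle : ∀ i, α i ≤ -r := fun i => by linarith [hmurow i, hro0 i]
  have hAlast : ∀ j : Fin (m+1), j ≠ Fin.last m →
      |A (Fin.last m) j| = (if (m:ℕ) = (j:ℕ)+1 then |β (Fin.last m)| else 0) := by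
    intro j hj
    have hjv : (j:ℕ) ≠ m := by
      intro hc'
      exact hj (Fin.ext (by simp [hc', Fin.val_last]))
    have hjlt : (j:ℕ) < m + 1 := j.isLt
    rw [hA]
    simp only [tridiag, Matrix.of_apply, Fin.val_last]
    rw [if_neg (by omega : ¬ (m:ℕ) = (j:ℕ))]
    by_cases hcase : (m:ℕ) = (j:ℕ)+1
    · rw [if_pos hcase, if_pos hcase]
    · rw [if_neg hcase, if_neg hcase, if_neg (by omega : ¬ (j:ℕ) = (m:ℕ)+1), abs_zero]
  have hrolast : ∑ j ∈ Finset.univ.erase (Fin.last m), |A (Fin.last m) j| ≤ |β (Fin.last m)| := by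
    calc ∑ j ∈ Finset.univ.erase (Fin.last m), |A (Fin.last m) j|
        = ∑ j ∈ Finset.univ.erase (Fin.last m),
            (if (m:ℕ) = (j:ℕ)+1 then |β (Fin.last m)| else 0) :=
          Finset.sum_congr rfl (fun j hj => hAlast j (Finset.mem_erase.1 hj).1)
      _ ≤ |β (Fin.last m)| := by
          refine Stmt18Aux.sum_ite_le _ (abs_nonneg _) ?_
          intro p _ q _ h1 h2
          exact Fin.ext (by omega)
  set MA : Matrix (Fin (m+1)) (Fin (m+1)) ℝ := 1 - (θ*dt) • A with hMAeq
  set NA : Matrix (Fin (m+1)) (Fin (m+1)) ℝ := 1 + ((1-θ)*dt) • A with hNAeq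
  have hMAdiagv : ∀ i, MA i i = 1 - θ*dt*(α i) := by
    intro i
    rw [hMAeq]
    simp [Matrix.sub_apply, Matrix.smul_apply, Matrix.one_apply_eq, smul_eq_mul, hAdiag i]
  have hMAdiag : ∀ i, |MA i i| = 1 - θ*dt*(α i) := by
    intro i
    rw [hMAdiagv i, abs_of_pos]
    nlinarith [mul_le_mul_of_nonneg_left (hαle i) hθdt.le, mul_pos hθdt hr]
  have hMAoffsum : ∀ i, ∑ j ∈ Finset.univ.erase i, |MA i j|
      = θ*dt * ∑ j ∈ Finset.univ.erase i, |A i j| := by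
    intro i
    rw [Finset.mul_sum]
    refine Finset.sum_congr rfl (fun j hj => ?_)
    have hji : j ≠ i := (Finset.mem_erase.1 hj).1
    have h1 : MA i j = -(θ*dt * A i j) := by
      rw [hMAeq]
      simp [Matrix.sub_apply, Matrix.smul_apply, smul_eq_mul,
        Matrix.one_apply_ne (Ne.symm hji)]
    rw [h1, abs_neg, abs_mul, abs_of_pos hθdt]
  have hδMA : ∀ i : Fin (m+1),
      0 < (if i = Fin.last m then 1 + θ*dt*(r + |γ (Fin.last m)|) else 1 + θ*dt*r) := by
    intro i
    split_ifs <;> nlinarith [abs_nonneg (γ (Fin.last m)), mul_pos hθdt hr, hθdt]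
  have hddMA : ∀ i, ∑ j ∈ Finset.univ.erase i, |MA i j| +
      (if i = Fin.last m then 1 + θ*dt*(r + |γ (Fin.last m)|) else 1 + θ*dt*r) ≤ |MA i i| := by
    intro i
    rw [hMAoffsum i, hMAdiag i]
    by_cases hi : i = Fin.last m
    · subst hi
      rw [if_pos rfl]
      have key : (∑ j ∈ Finset.univ.erase (Fin.last m), |A (Fin.last m) j|)
          + r + |γ (Fin.last m)| + α (Fin.last m) ≤ 0 := by linarith [hrolast, hrow]
      nlinarith [mul_le_mul_of_nonneg_left key hθdt.le]
    · rw [if_neg hi]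
      have key : (∑ j ∈ Finset.univ.erase i, |A i j|) + r + α i ≤ 0 := by linarith [hmurow i]
      nlinarith [mul_le_mul_of_nonneg_left key hθdt.le]
  have hMAdet : IsUnit MA.det := Stmt18Aux.dd_isUnit MA _ hδMA hddMA
  have hAdiagabs : ∀ i, |A i i| = -α i := by
    intro i
    rw [hAdiag i, abs_of_nonpos (by linarith [hαle i] : α i ≤ 0)]
  have hδA : ∀ i : Fin (m+1), 0 < (if i = Fin.last m then r + |γ (Fin.last m)| else r) := by
    intro i
    split_ifs <;> [nlinarith [abs_nonneg (γ (Fin.last m))]; exact hr]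
  have hddA : ∀ i, ∑ j ∈ Finset.univ.erase i, |A i j| +
      (if i = Fin.last m then r + |γ (Fin.last m)| else r) ≤ |A i i| := by
    intro i
    rw [hAdiagabs i]
    by_cases hi : i = Fin.last m
    · subst hi
      rw [if_pos rfl]
      linarith [hrolast, hrow]
    · rw [if_neg hi]
      linarith [hmurow i]
  have hAdet : IsUnit A.det := Stmt18Aux.dd_isUnit A _ hδA hddA
  -- the B matrix
  set e : Fin (m+1) → ℝ := fun i => if i = Fin.last m then (1:ℝ) else 0 with heeq
  have hBv : ∀ x : Fin 2 → ℝ, B *ᵥ x = (γ (Fin.last m) * x 0) • e := by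
    intro x
    funext i
    rw [hB]
    simp only [Bmat, Matrix.mulVec, dotProduct, Fin.sum_univ_two, Matrix.of_apply,
      Pi.smul_apply, smul_eq_mul, heeq]
    by_cases hi : i = Fin.last m
    · simp [hi]
    · simp [hi]
  set x0 : ℝ := a * (1+c)⁻¹ + b * spen with hx0def
  have hax : |a| ≤ |g S| + S * |b| := by
    rw [haeq, sub_eq_add_neg]
    refine le_trans (abs_add_le _ _) ?_
    rw [abs_neg, abs_mul, abs_of_pos hS0]
  have hgsp : |g spen| ≤ |g S| + (S - spen)*|b| := by
    have h6 : g spen = g S - b*(S-spen) := by linarith [h5]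
    rw [h6, sub_eq_add_neg]
    refine le_trans (abs_add_le _ _) ?_
    rw [abs_neg, abs_mul, abs_of_pos hh]
    linarith
  have hx0b : |x0| ≤ |g S| + S * |b| := by
    have e1 : x0 = (g spen + b*spen*c)/(1+c) := by
      rw [hx0def, hgspen]
      field_simp
      ring
    rw [e1, abs_div, abs_of_pos h1c, div_le_iff₀ h1c]
    have h6 : |g spen + b*spen*c| ≤ |g spen| + |b| * spen * c := by
      refine le_trans (abs_add_le _ _) ?_
      rw [abs_mul, abs_mul, abs_of_pos hspen, abs_of_nonneg hc0]
    nlinarith [hgsp, abs_nonneg b, abs_nonneg (g S), hc0, hspen, hsS,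
      mul_nonneg hc0 (abs_nonneg (g S)),
      mul_nonneg (mul_nonneg hc0 (by linarith : (0:ℝ) ≤ S - spen)) (abs_nonneg b),
      mul_nonneg hspen.le (abs_nonneg b)]
  -- stability
  set F : Matrix (Fin (m+1)) (Fin (m+1)) ℝ := phiM θ dt A with hFeq
  have hKn : ∀ n : ℕ, n ≤ N → matMaxNorm (F^n) ≤ K := by
    intro n hn
    have := hK N hN n hn
    rwa [← hdteq, ← hFeq] at this
  have hK1 : (1:ℝ) ≤ K := by
    have h0 := hKn 0 (Nat.zero_le N)
    have h1 : (1:ℝ) ≤ matMaxNorm (F^0) := by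
      rw [pow_zero]
      have h2 := Stmt18Aux.rowSum_le_matMaxNorm (1 : Matrix (Fin (m+1)) (Fin (m+1)) ℝ) 0
      simpa [Matrix.one_apply, apply_ite (abs : ℝ → ℝ)] using h2
    linarith
  have hK0 : (0:ℝ) ≤ K := by linarith
  -- part (b) core
  have hY1' : Y1 = MA⁻¹ * (dt • B) * MC⁻¹ := hY1
  have hY1w : Y1 *ᵥ w = MA⁻¹ *ᵥ ((dt * (γ (Fin.last m) * x0)) • e) := by
    rw [hY1', ← Matrix.mulVec_mulVec, ← Matrix.mulVec_mulVec, hx1,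
      Matrix.smul_mulVec, hBv, smul_smul]
    congr 2
    simp [hueq, hveq, hx0def]
  have hyb : ∀ i, |(MA⁻¹ *ᵥ ((dt * (γ (Fin.last m) * x0)) • e)) i| ≤ 2 * |x0| := by
    refine Stmt18Aux.dd_bound MA _ hδMA hddMA
      (z := (dt * (γ (Fin.last m) * x0)) • e) ?_ ?_
    · rw [Matrix.mulVec_mulVec, Matrix.mul_nonsing_inv _ hMAdet, Matrix.one_mulVec]
    · intro i
      by_cases hi : i = Fin.last m
      · subst hi
        rw [if_pos rfl]
        simp only [Pi.smul_apply, heeq, smul_eq_mul]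
        simp only [eq_self_iff_true, if_true, mul_one]
        rw [abs_mul, abs_mul, abs_of_pos hdt]
        nlinarith [abs_nonneg (γ (Fin.last m)), abs_nonneg x0, hθdt, hdt,
          mul_nonneg (mul_nonneg (by linarith : (0:ℝ) ≤ 2*θ - 1) hdt.le)
            (mul_nonneg (abs_nonneg (γ (Fin.last m))) (abs_nonneg x0)),
          mul_nonneg (mul_nonneg (mul_nonneg hθ0.le hdt.le) hr.le) (abs_nonneg x0)]
      · rw [if_neg hi]
        simp only [Pi.smul_apply, heeq, smul_eq_mul]
        rw [if_neg hi, mul_zero, abs_zero]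
        positivity
  have partb : ∀ n : ℕ, n ≤ N → vecMaxNorm ((F^n * Y1) *ᵥ w) ≤ 2*K*(|g S| + S*|b|) := by
    intro n hn
    apply Stmt18Aux.vecMaxNorm_le
    intro i
    rw [← Matrix.mulVec_mulVec, hY1w]
    refine le_trans (Stmt18Aux.mulVec_entry_bound (F^n) (hKn n hn) hyb (by positivity) i) ?_
    nlinarith [hx0b, hK0, abs_nonneg x0]
  -- part (a)
  have hpsieq : ∀ k : ℕ, psiM θ dt k C = FC^k * MC⁻¹ := by
    intro k
    rw [hFCdef, hMCeq]
    rfl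
  have hcoefb : ∀ k:ℕ, |a * (1+c)⁻¹ * φc^k| ≤ |a| := by
    intro k
    rw [abs_mul, abs_mul, abs_of_pos hinvpos, abs_pow]
    calc |a| * (1+c)⁻¹ * |φc|^k ≤ |a| * 1 * 1 := by
          gcongr <;> first
            | exact hinv1
            | exact hpow k
      _ = |a| := by ring
  have parta : ∀ n : ℕ, vecMaxNorm ((psiM θ dt n C) *ᵥ w) ≤ |g S| + 2*S*|b| := by
    intro n
    have hpsi : (psiM θ dt n C) *ᵥ w = (a * (1+c)⁻¹ * φc^n) • u + b • v2 := by
      rw [hpsieq n, ← Matrix.mulVec_mulVec, hx1, Matrix.mulVec_add, Matrix.mulVec_smul,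
        Matrix.mulVec_smul, hFCnu n, hFCnv n, smul_smul]
    rw [hpsi]
    apply Stmt18Aux.vecMaxNorm_le
    intro i
    have h7 : ∀ t : ℝ, 0 < t → t ≤ S → |a * (1+c)⁻¹ * φc^n * 1 + b * t| ≤ |g S| + 2*S*|b| := by
      intro t ht htS
      rw [mul_one]
      refine le_trans (abs_add_le _ _) ?_
      have h8 : |b*t| = |b| * t := by rw [abs_mul, abs_of_pos ht]
      rw [h8]
      nlinarith [hax, hcoefb n, abs_nonneg b, htS,
        mul_le_mul_of_nonneg_left htS (abs_nonneg b)]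
    fin_cases i
    · simpa [hueq, hveq] using h7 spen hspen (le_of_lt hsS)
    · simpa [hueq, hveq] using h7 S hS0 le_rfl
  -- part (c) : telescoping
  have hFdef : F = MA⁻¹ * NA := by
    rw [hFeq, hMAeq, hNAeq]
    rfl
  have hNAMA : NA - MA = dt • A := by
    have h1 : dt • A = ((1-θ)*dt) • A + (θ*dt) • A := by
      rw [← add_smul]
      congr 1
      ring
    rw [hNAeq, hMAeq, h1]
    abel
  have hFsub1 : F - 1 = dt • (MA⁻¹ * A) := by
    have h1 : F - 1 = MA⁻¹ * (NA - MA) := by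
      rw [hFdef, Matrix.mul_sub, Matrix.nonsing_inv_mul _ hMAdet]
    rw [h1, hNAMA, Matrix.mul_smul]
  have hφc1c : (1:ℝ) - φc = dt * (1+c)⁻¹ * r := by
    rw [hφceq, hceq]
    field_simp
    ring
  have hcoef2 : (1-θ)*dt + φc*(θ*dt) = dt*(1+c)⁻¹ := by
    rw [hφceq]
    field_simp
    ring
  have hFsubφ : F - φc • 1 = (dt * (1+c)⁻¹) • (MA⁻¹ * Pm) := by
    have h1 : F - φc • 1 = MA⁻¹ * (NA - φc • MA) := by
      rw [hFdef, Matrix.mul_sub, Matrix.mul_smul, Matrix.nonsing_inv_mul _ hMAdet]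
    have h2 : NA - φc • MA = (dt * (1+c)⁻¹) • Pm := by
      have h3 : NA - φc • MA = ((1:ℝ) - φc) • (1 : Matrix (Fin (m+1)) (Fin (m+1)) ℝ)
          + (((1-θ)*dt) + φc*(θ*dt)) • A := by
        rw [hNAeq, hMAeq, smul_sub, smul_smul, sub_smul, one_smul, add_smul]
        abel
      rw [h3, hφc1c, hcoef2, hPmeq, smul_add, smul_smul]
    rw [h1, h2, Matrix.mul_smul]
  set z1 : Fin (m+1) → ℝ := (γ (Fin.last m) * a * (1+c)⁻¹) • e with hz1eq
  set z2 : Fin (m+1) → ℝ := (γ (Fin.last m) * (b * spen)) • e with hz2eq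
  set q1 : Fin (m+1) → ℝ := Pm⁻¹ *ᵥ z1 with hq1eq
  set q2 : Fin (m+1) → ℝ := A⁻¹ *ᵥ z2 with hq2eq
  have hPmq1 : Pm *ᵥ q1 = z1 := by
    rw [hq1eq, Matrix.mulVec_mulVec, Matrix.mul_nonsing_inv _ hinv, Matrix.one_mulVec]
  have hAq2 : A *ᵥ q2 = z2 := by
    rw [hq2eq, Matrix.mulVec_mulVec, Matrix.mul_nonsing_inv _ hAdet, Matrix.one_mulVec]
  have hq2b : ∀ i, |q2 i| ≤ spen * |b| := by
    refine Stmt18Aux.dd_bound A _ hδA hddA hAq2 ?_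
    intro i
    by_cases hi : i = Fin.last m
    · subst hi
      rw [if_pos rfl]
      simp only [hz2eq, Pi.smul_apply, heeq, smul_eq_mul]
      simp only [eq_self_iff_true, if_true, mul_one]
      have habs : |γ (Fin.last m) * (b * spen)| = |γ (Fin.last m)| * |b| * spen := by
        rw [abs_mul, abs_mul, abs_of_pos hspen]
        ring
      rw [habs]
      nlinarith [abs_nonneg (γ (Fin.last m)), abs_nonneg b, hspen,
        mul_nonneg (mul_nonneg hr.le hspen.le) (abs_nonneg b)]
    · rw [if_neg hi]
      simp only [hz2eq, Pi.smul_apply, heeq, smul_eq_mul]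
      rw [if_neg hi, mul_zero, abs_zero]
      positivity
  -- q1 bound via ε-perturbation and continuity
  have hq1b : ∀ i, |q1 i| ≤ |a| := by
    have hPdetne : Pm.det ≠ 0 := hinv.ne_zero
    intro i
    have hev : ∀ ε : ℝ, 0 < ε →
        |(((Pm - ε • 1)⁻¹ : Matrix (Fin (m+1)) (Fin (m+1)) ℝ) *ᵥ z1) i| ≤ |a| := by
      intro ε hε
      have hQdiag : ∀ i, (Pm - ε • 1) i i = r + α i - ε := by
        intro i
        simp [Matrix.sub_apply, Matrix.smul_apply, Matrix.one_apply_eq, smul_eq_mul, hPdiag i]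
      have hQoff : ∀ i j : Fin (m+1), j ≠ i → (Pm - ε • 1) i j = A i j := by
        intro i j hj
        simp [Matrix.sub_apply, Matrix.smul_apply, smul_eq_mul,
          Matrix.one_apply_ne (Ne.symm hj), hPoff i j hj]
      have hQoffsum : ∀ i, ∑ j ∈ Finset.univ.erase i, |(Pm - ε • 1) i j|
          = ∑ j ∈ Finset.univ.erase i, |A i j| := by
        intro i
        exact Finset.sum_congr rfl (fun j hj => by rw [hQoff i j (Finset.mem_erase.1 hj).1])
      have hδQ : ∀ i : Fin (m+1),
          0 < (if i = Fin.last m then ε + |γ (Fin.last m)| else ε) := by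
        intro i
        split_ifs <;> [nlinarith [abs_nonneg (γ (Fin.last m))]; exact hε]
      have hddQ : ∀ i, ∑ j ∈ Finset.univ.erase i, |(Pm - ε • 1) i j| +
          (if i = Fin.last m then ε + |γ (Fin.last m)| else ε) ≤ |(Pm - ε • 1) i i| := by
        intro i
        rw [hQoffsum i, hQdiag i]
        have hd : |r + α i - ε| = -(r + α i) + ε := by
          rw [abs_of_nonpos (by nlinarith [hmurow i, hro0 i] : r + α i - ε ≤ 0)]
          ring
        rw [hd]
        by_cases hi : i = Fin.last m
        · subst hi
          rw [if_pos rfl]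
          linarith [hrolast, hrow]
        · rw [if_neg hi]
          linarith [hmurow i]
      have hQdet := Stmt18Aux.dd_isUnit (Pm - ε • 1) _ hδQ hddQ
      have hQz : (Pm - ε • 1) *ᵥ ((Pm - ε • 1)⁻¹ *ᵥ z1) = z1 := by
        rw [Matrix.mulVec_mulVec, Matrix.mul_nonsing_inv _ hQdet, Matrix.one_mulVec]
      refine Stmt18Aux.dd_bound _ _ hδQ hddQ hQz ?_ i
      intro i
      by_cases hi : i = Fin.last m
      · subst hi
        rw [if_pos rfl]
        simp only [hz1eq, Pi.smul_apply, heeq, smul_eq_mul]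
        simp only [eq_self_iff_true, if_true, mul_one]
        have habs : |γ (Fin.last m) * a * (1+c)⁻¹| = |γ (Fin.last m)| * |a| * (1+c)⁻¹ := by
          rw [abs_mul, abs_mul, abs_of_pos hinvpos]
        rw [habs]
        have h2' : |γ (Fin.last m)| * |a| * (1+c)⁻¹ ≤ |γ (Fin.last m)| * |a| := by
          nlinarith [mul_nonneg (abs_nonneg (γ (Fin.last m))) (abs_nonneg a), hinv1, hinvpos]
        nlinarith [h2', mul_nonneg hε.le (abs_nonneg a)]
      · rw [if_neg hi]
        simp only [hz1eq, Pi.smul_apply, heeq, smul_eq_mul]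
        rw [if_neg hi, mul_zero, abs_zero]
        positivity
    -- continuity of ε ↦ ((Pm - ε•1)⁻¹ *ᵥ z1) i at 0
    have hPmc : Continuous (fun ε : ℝ => Pm - ε • (1 : Matrix (Fin (m+1)) (Fin (m+1)) ℝ)) := by
      apply Continuous.sub continuous_const
      exact continuous_id.smul continuous_const
    have hdetc : Continuous (fun ε : ℝ => (Pm - ε • (1:Matrix (Fin (m+1)) (Fin (m+1)) ℝ)).det) :=
      hPmc.matrix_det
    have hadjc : Continuous
        (fun ε : ℝ => (Pm - ε • (1:Matrix (Fin (m+1)) (Fin (m+1)) ℝ)).adjugate) :=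
      hPmc.matrix_adjugate
    have hdet0 : (Pm - (0:ℝ) • (1:Matrix (Fin (m+1)) (Fin (m+1)) ℝ)).det ≠ 0 := by
      simpa using hPdetne
    have hform : (fun ε : ℝ => (((Pm - ε • 1)⁻¹ : Matrix (Fin (m+1)) (Fin (m+1)) ℝ) *ᵥ z1) i)
        = fun ε : ℝ => ∑ j, (((Pm - ε • (1:Matrix (Fin (m+1)) (Fin (m+1)) ℝ)).det)⁻¹ *
            (Pm - ε • (1:Matrix (Fin (m+1)) (Fin (m+1)) ℝ)).adjugate i j) * z1 j := by
      funext ε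
      rw [Matrix.inv_def, Ring.inverse_eq_inv']
      simp [Matrix.mulVec, dotProduct, Matrix.smul_apply, smul_eq_mul]
    have hcontq : ContinuousAt
        (fun ε : ℝ => (((Pm - ε • 1)⁻¹ : Matrix (Fin (m+1)) (Fin (m+1)) ℝ) *ᵥ z1) i) 0 := by
      rw [hform]
      refine tendsto_finset_sum _ (fun j _ => ?_)
      refine ContinuousAt.mul (ContinuousAt.mul ?_ ?_) continuousAt_const
      · exact ContinuousAt.inv₀ hdetc.continuousAt hdet0
      · exact ((continuous_apply j).comp ((continuous_apply i).comp hadjc)).continuousAt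
    have h00 : (((Pm - (0:ℝ) • 1)⁻¹ : Matrix (Fin (m+1)) (Fin (m+1)) ℝ) *ᵥ z1) i = q1 i := by
      rw [hq1eq]
      congr 2
      simp
    have hlim : Filter.Tendsto
        (fun ε : ℝ => |(((Pm - ε • 1)⁻¹ : Matrix (Fin (m+1)) (Fin (m+1)) ℝ) *ᵥ z1) i|)
        (nhdsWithin 0 (Set.Ioi 0)) (nhds (|q1 i|)) := by
      rw [← h00]
      exact (hcontq.tendsto.abs).mono_left nhdsWithin_le_nhds
    refine le_of_tendsto hlim ?_
    filter_upwards [self_mem_nhdsWithin] with ε hε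
    exact hev ε hε
  -- inner identity
  have hG1 : (F - φc • 1) *ᵥ q1 = (dt*(1+c)⁻¹) • (MA⁻¹ *ᵥ z1) := by
    rw [hFsubφ, Matrix.smul_mulVec, ← Matrix.mulVec_mulVec, hPmq1]
  have hG2 : (F - 1) *ᵥ q2 = dt • (MA⁻¹ *ᵥ z2) := by
    rw [hFsub1, Matrix.smul_mulVec, ← Matrix.mulVec_mulVec, hAq2]
  have hinner : ∀ j : ℕ, Y1 *ᵥ ((FC^j) *ᵥ (MC⁻¹ *ᵥ w))
      = φc^j • ((F - φc • 1) *ᵥ q1) + (F - 1) *ᵥ q2 := by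
    intro j
    have hz1e : MA⁻¹ *ᵥ z1 = (γ (Fin.last m) * a * (1+c)⁻¹) • (MA⁻¹ *ᵥ e) := by
      rw [hz1eq, Matrix.mulVec_smul]
    have hz2e : MA⁻¹ *ᵥ z2 = (γ (Fin.last m) * (b * spen)) • (MA⁻¹ *ᵥ e) := by
      rw [hz2eq, Matrix.mulVec_smul]
    rw [hx1, Matrix.mulVec_add, Matrix.mulVec_smul, Matrix.mulVec_smul, hFCnu j, hFCnv j,
      hY1', ← Matrix.mulVec_mulVec, ← Matrix.mulVec_mulVec,
      Matrix.mulVec_add, Matrix.mulVec_smul, Matrix.mulVec_smul, Matrix.mulVec_smul,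
      hMCiu, hMCiv, Matrix.smul_mulVec, hBv, hG1, hG2, hz1e, hz2e]
    rw [Matrix.mulVec_smul, Matrix.mulVec_smul]
    have hx0j : ((a * (1+c)⁻¹) • (φc^j • ((1+c)⁻¹ • u)) + b • v2) 0
        = a * (1+c)⁻¹ * φc^j * (1+c)⁻¹ + b * spen := by
      simp [hueq, hveq]
      ring
    rw [hx0j]
    funext i'
    simp only [Pi.smul_apply, Pi.add_apply, smul_eq_mul]
    ring
  have hterm : ∀ (k j : ℕ), (F^k * Y1 * FC^j) *ᵥ (MC⁻¹ *ᵥ w)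
      = (φc^j • (F^k * (F - φc • 1))) *ᵥ q1 + (F^k * (F - 1)) *ᵥ q2 := by
    intro k j
    rw [← Matrix.mulVec_mulVec, ← Matrix.mulVec_mulVec, hinner j]
    rw [Matrix.mulVec_add, Matrix.mulVec_smul]
    congr 1
    · rw [Matrix.mulVec_mulVec, ← Matrix.smul_mulVec]
    · rw [Matrix.mulVec_mulVec]
  have htel2 : ∀ n : ℕ, ∑ j ∈ Finset.range n, F^(n-j-1) * (F - 1) = F^n - 1 := by
    intro n
    have hcong : ∀ j ∈ Finset.range n, F^(n-j-1) * (F - 1) = F^(n-j) - F^(n-(j+1)) := by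
      intro j hj
      have hj' : j < n := Finset.mem_range.1 hj
      have h1 : F^(n-j-1) * F = F^(n-j) := by
        rw [← pow_succ]
        congr 1
        omega
      rw [Matrix.mul_sub, Matrix.mul_one, h1, show n-j-1 = n-(j+1) from by omega]
    rw [Finset.sum_congr rfl hcong, Finset.sum_range_sub' (fun j => F^(n-j))]
    simp
  have htel1 : ∀ n : ℕ, ∑ j ∈ Finset.range n, φc^j • (F^(n-j-1) * (F - φc • 1))
      = F^n - φc^n • 1 := by
    intro n
    have hcong : ∀ j ∈ Finset.range n, φc^j • (F^(n-j-1) * (F - φc • 1))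
        = φc^j • F^(n-j) - φc^(j+1) • F^(n-(j+1)) := by
      intro j hj
      have hj' : j < n := Finset.mem_range.1 hj
      have h1 : F^(n-j-1) * F = F^(n-j) := by
        rw [← pow_succ]
        congr 1
        omega
      rw [Matrix.mul_sub, Matrix.mul_smul, Matrix.mul_one, smul_sub, smul_smul, h1,
        ← pow_succ, show n-j-1 = n-(j+1) from by omega]
    rw [Finset.sum_congr rfl hcong,
      Finset.sum_range_sub' (fun j => φc^j • F^(n-j))]
    simp
  have partc : ∀ n : ℕ, n ≤ N → vecMaxNorm ((Y n * MC⁻¹) *ᵥ w)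
      ≤ (K+1)*(|g S| + 2*S*|b|) := by
    intro n hn
    have hsum : (Y n * MC⁻¹) *ᵥ w = (F^n - φc^n • 1) *ᵥ q1 + (F^n - 1) *ᵥ q2 := by
      rw [← Matrix.mulVec_mulVec, hY n, Stmt18Aux.sum_mulVec]
      rw [Finset.sum_congr rfl (fun j _ => hterm (n-j-1) j), Finset.sum_add_distrib,
        ← Stmt18Aux.sum_mulVec, ← Stmt18Aux.sum_mulVec, htel1 n, htel2 n]
    rw [hsum, Matrix.sub_mulVec, Matrix.sub_mulVec, Matrix.smul_mulVec,
      Matrix.one_mulVec, Matrix.one_mulVec]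
    apply Stmt18Aux.vecMaxNorm_le
    intro i
    have hb1 : |(F^n *ᵥ q1) i| ≤ K * |a| :=
      Stmt18Aux.mulVec_entry_bound (F^n) (hKn n hn) hq1b (abs_nonneg a) i
    have hb2 : |(F^n *ᵥ q2) i| ≤ K * (spen*|b|) :=
      Stmt18Aux.mulVec_entry_bound (F^n) (hKn n hn) hq2b
        (mul_nonneg hspen.le (abs_nonneg b)) i
    have hent : (F^n *ᵥ q1 - φc^n • q1 + (F^n *ᵥ q2 - q2)) i
        = ((F^n *ᵥ q1) i - φc^n * q1 i) + ((F^n *ᵥ q2) i - q2 i) := by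
      simp only [Pi.add_apply, Pi.sub_apply, Pi.smul_apply, smul_eq_mul]
    rw [hent]
    have h10 : |φc^n * q1 i| ≤ |a| := by
      rw [abs_mul, abs_pow]
      nlinarith [hpow n, hq1b i, abs_nonneg (q1 i), pow_nonneg (abs_nonneg φc) n]
    have h11 : |a| + spen*|b| ≤ |g S| + 2*S*|b| := by
      nlinarith [hax, mul_nonneg (by linarith : (0:ℝ) ≤ S - spen) (abs_nonneg b)]
    calc |((F^n *ᵥ q1) i - φc^n * q1 i) + ((F^n *ᵥ q2) i - q2 i)|
        ≤ |(F^n *ᵥ q1) i - φc^n * q1 i| + |(F^n *ᵥ q2) i - q2 i| := abs_add_le _ _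
      _ ≤ (|(F^n *ᵥ q1) i| + |φc^n * q1 i|) + (|(F^n *ᵥ q2) i| + |q2 i|) := by
          gcongr <;> exact Stmt18Aux.abs_sub_le' _ _
      _ ≤ (K * |a| + |a|) + (K * (spen*|b|) + spen*|b|) := by
          gcongr <;> first
            | exact hb1
            | exact h10
            | exact hb2
            | exact hq2b i
      _ = (K+1) * (|a| + spen*|b|) := by ring
      _ ≤ (K+1)*(|g S| + 2*S*|b|) := by
          refine mul_le_mul_of_nonneg_left h11 (by linarith)
  -- conclusion
  intro n hn
  have hnN : n ≤ N := le_trans hn (Nat.sub_le N 1)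
  exact ⟨parta n, partb n hnN, partc n hnN⟩
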